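/- Let X be a real Hilbert space and Y a real Hilbert space, A : X → Y a bounded linear operator, and (X_j)_{j∈ℕ} a sequence of closed subspaces of X with X_j ⊆ X_{j+1} for all j and (ker A)^⊥ ⊆ closure(∪_{j∈ℕ} X_j). Let g ∈ Y, ρ' > 0, and let (η_l)_{l∈ℕ}, (δ_l)_{l∈ℕ} be nonnegative null sequences and (j_l)_{l∈ℕ} a sequence in ℕ with j_l → ∞. For each l, let B_l : X → Y be a bounded linear operator with ‖B_l − A‖ ≤ η_l and g_l ∈ Y with ‖g_l − g‖ ≤ δ_l. Let x_l ∈ X_{j_l} with x_l → x in X. Then, as l → ∞: (i) w_l := B_l x_l − g_l → w := A x − g in Y; (ii) u_l := P_{X_{j_l}}(B_l* w_l) → A* w in X; (iii) ⟪w_l, g_l⟫ → ⟪w, g⟫; and (iv) (ρ' η_l + δ_l)‖w_l‖ → 0. -/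

import Mathlib

set_option maxHeartbeats 1000000
open Filter
open scoped RealInnerProductSpace

/-- If `z` lies in the closure of the union of an increasing sequence of complete
subspaces, `j l → ∞` and `a l → z`, then `P_{Xs (j l)} (a l) → z`. -/
lemma proj_tendsto_aux {X : Type*} [NormedAddCommGroup X] [InnerProductSpace ℝ X]
    (Xs : ℕ → Submodule ℝ X) [∀ i, CompleteSpace (Xs i)]
    (hmono : ∀ i, Xs i ≤ Xs (i + 1))
    (j : ℕ → ℕ) (hj : Tendsto j atTop atTop)
    (z : X) (hz : z ∈ closure (⋃ i, (Xs i : Set X)))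
    (a : ℕ → X) (ha : Tendsto a atTop (nhds z)) :
    Tendsto (fun l => (Submodule.orthogonalProjectionOnto (Xs (j l)) (a l) : X)) atTop (nhds z) := by
  rw [Metric.tendsto_atTop]
  intro ε hε
  obtain ⟨y, hy, hyz⟩ := Metric.mem_closure_iff.mp hz (ε / 3) (by positivity)
  obtain ⟨m, hm⟩ := Set.mem_iUnion.mp hy
  obtain ⟨N1, hN1⟩ := Metric.tendsto_atTop.mp ha (ε / 3) (by positivity)
  obtain ⟨N2, hN2⟩ := (tendsto_atTop_atTop.mp hj) m
  refine ⟨max N1 N2, fun l hl => ?_⟩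
  have hjl : m ≤ j l := hN2 l (le_trans (le_max_right _ _) hl)
  have hym : y ∈ Xs (j l) := (monotone_nat_of_le_succ hmono hjl) hm
  have hPz : ‖z - (Submodule.orthogonalProjectionOnto (Xs (j l)) z : X)‖ ≤ ‖z - y‖ := by
    rw [← Submodule.starProjection_apply, Submodule.starProjection_minimal]
    refine ciInf_le ⟨0, ?_⟩ (⟨y, hym⟩ : Xs (j l))
    rintro _ ⟨v, rfl⟩; exact norm_nonneg _
  have hcontr : ∀ u : X, ‖(Submodule.orthogonalProjectionOnto (Xs (j l)) u : X)‖ ≤ ‖u‖ := by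
    intro u
    calc ‖(Submodule.orthogonalProjectionOnto (Xs (j l)) u : X)‖
        ≤ ‖Submodule.orthogonalProjectionOnto (Xs (j l))‖ * ‖u‖ :=
          (Submodule.orthogonalProjectionOnto (Xs (j l))).le_opNorm u
      _ ≤ 1 * ‖u‖ := by
          gcongr; exact Submodule.orthogonalProjectionOnto_norm_le _
      _ = ‖u‖ := one_mul _
  have hdiff : ((Submodule.orthogonalProjectionOnto (Xs (j l)) (a l) : X)
      - (Submodule.orthogonalProjectionOnto (Xs (j l)) z : X))
      = (Submodule.orthogonalProjectionOnto (Xs (j l)) (a l - z) : X) := by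
    rw [map_sub]; rfl
  have h1 : ‖(Submodule.orthogonalProjectionOnto (Xs (j l)) (a l) : X)
      - (Submodule.orthogonalProjectionOnto (Xs (j l)) z : X)‖ ≤ ‖a l - z‖ := by
    rw [hdiff]; exact hcontr _
  have hal : ‖a l - z‖ < ε / 3 := by
    have := hN1 l (le_trans (le_max_left _ _) hl)
    rwa [dist_eq_norm] at this
  calc dist ((Submodule.orthogonalProjectionOnto (Xs (j l)) (a l) : X)) z
      ≤ ‖(Submodule.orthogonalProjectionOnto (Xs (j l)) (a l) : X)
          - (Submodule.orthogonalProjectionOnto (Xs (j l)) z : X)‖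
        + ‖(Submodule.orthogonalProjectionOnto (Xs (j l)) z : X) - z‖ := by
        rw [dist_eq_norm]
        exact norm_sub_le_norm_sub_add_norm_sub _ _ _
    _ ≤ ‖a l - z‖ + ‖z - y‖ := by
        refine add_le_add h1 ?_
        rw [norm_sub_rev]; exact hPz
    _ < ε / 3 + ε / 3 := by
        refine add_lt_add hal ?_
        rw [← dist_eq_norm]; exact hyz
    _ < ε := by linarith

/-- In the RESESOP setting with nested closed subspaces `(Xs i)` of the
real Hilbert space `X`, `(ker A)ᗮ ⊆ closure (⋃ i, Xs i)`, null sequences `η, δ ≥ 0`,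
`j l → ∞`, perturbed operators `‖B l - A‖ ≤ η l`, perturbed data `‖gl l - g‖ ≤ δ l` and
points `x l ∈ Xs (j l)` with `x l → xlim`, the auxiliary quantities converge:
`w l := B l (x l) - gl l → A xlim - g`, `u l := P_{Xs (j l)} ((B l)* (w l)) → A* (A xlim - g)`,
`⟪w l, gl l⟫ → ⟪A xlim - g, g⟫` and `(ρ' η l + δ l)‖w l‖ → 0`. -/
theorem resesop_auxiliary_quantities_converge
    {X Y : Type*} [NormedAddCommGroup X] [InnerProductSpace ℝ X] [CompleteSpace X]
    [NormedAddCommGroup Y] [InnerProductSpace ℝ Y] [CompleteSpace Y]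
    (A : X →L[ℝ] Y)
    (Xs : ℕ → Submodule ℝ X) [∀ i, CompleteSpace (Xs i)]
    (hmono : ∀ i, Xs i ≤ Xs (i + 1))
    (hdense : ((LinearMap.ker (A : X →ₗ[ℝ] Y))ᗮ : Set X) ⊆ closure (⋃ i, (Xs i : Set X)))
    (g : Y) (ρ' : ℝ) (hρ' : 0 < ρ')
    (η δ : ℕ → ℝ) (hη0 : ∀ l, 0 ≤ η l) (hδ0 : ∀ l, 0 ≤ δ l)
    (hηlim : Tendsto η atTop (nhds 0)) (hδlim : Tendsto δ atTop (nhds 0))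
    (j : ℕ → ℕ) (hj : Tendsto j atTop atTop)
    (B : ℕ → X →L[ℝ] Y) (hB : ∀ l, ‖B l - A‖ ≤ η l)
    (gl : ℕ → Y) (hgl : ∀ l, ‖gl l - g‖ ≤ δ l)
    (x : ℕ → X) (hxmem : ∀ l, x l ∈ Xs (j l))
    (xlim : X) (hx : Tendsto x atTop (nhds xlim)) :
    Tendsto (fun l => B l (x l) - gl l) atTop (nhds (A xlim - g)) ∧
    Tendsto
      (fun l => (Submodule.orthogonalProjectionOnto (Xs (j l)) ((B l).adjoint (B l (x l) - gl l)) : X))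
      atTop (nhds (A.adjoint (A xlim - g))) ∧
    Tendsto (fun l => ⟪B l (x l) - gl l, gl l⟫) atTop (nhds ⟪A xlim - g, g⟫) ∧
    Tendsto (fun l => (ρ' * η l + δ l) * ‖B l (x l) - gl l‖) atTop (nhds 0) := by
  -- `B l → A` in operator norm
  have hBA : Tendsto (fun l => B l - A) atTop (nhds 0) := by
    rw [tendsto_zero_iff_norm_tendsto_zero]
    exact squeeze_zero (fun l => norm_nonneg _) hB hηlim
  have hBtend : Tendsto B atTop (nhds A) := by
    have := hBA.add_const A
    simpa using this
  -- `gl l → g`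
  have hglg : Tendsto gl atTop (nhds g) := by
    have h0 : Tendsto (fun l => gl l - g) atTop (nhds 0) := by
      rw [tendsto_zero_iff_norm_tendsto_zero]
      exact squeeze_zero (fun l => norm_nonneg _) hgl hδlim
    have := h0.add_const g
    simpa using this
  -- `B l (x l) → A xlim`
  have happ : Tendsto (fun l => B l (x l)) atTop (nhds (A xlim)) := by
    have hc : Continuous fun p : (X →L[ℝ] Y) × X => p.1 p.2 :=
      isBoundedBilinearMap_apply.continuous
    exact (hc.tendsto (A, xlim)).comp (hBtend.prodMk_nhds hx)
  -- `w l → w`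
  have hw : Tendsto (fun l => B l (x l) - gl l) atTop (nhds (A xlim - g)) :=
    happ.sub hglg
  refine ⟨hw, ?_, ?_, ?_⟩
  · -- adjoints converge
    have hadj : Tendsto (fun l => (B l).adjoint) atTop (nhds A.adjoint) := by
      have hc : Continuous (ContinuousLinearMap.adjoint : (X →L[ℝ] Y) → (Y →L[ℝ] X)) :=
        (ContinuousLinearMap.adjoint : (X →L[ℝ] Y) ≃ₗᵢ[ℝ] (Y →L[ℝ] X)).continuous
      exact (hc.tendsto A).comp hBtend
    have ha : Tendsto (fun l => (B l).adjoint (B l (x l) - gl l)) atTop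
        (nhds (A.adjoint (A xlim - g))) := by
      have hc : Continuous fun p : (Y →L[ℝ] X) × Y => p.1 p.2 :=
        isBoundedBilinearMap_apply.continuous
      exact (hc.tendsto (A.adjoint, A xlim - g)).comp (hadj.prodMk_nhds hw)
    have hzmem : A.adjoint (A xlim - g) ∈ (LinearMap.ker (A : X →ₗ[ℝ] Y))ᗮ := by
      rw [Submodule.mem_orthogonal]
      intro u hu
      have huA : A u = 0 := LinearMap.mem_ker.mp hu
      rw [ContinuousLinearMap.adjoint_inner_right, huA, inner_zero_left]
    exact proj_tendsto_aux Xs hmono j hj _ (hdense hzmem) _ ha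
  · exact hw.inner hglg
  · -- coefficient tends to 0
    have hcoef : Tendsto (fun l => ρ' * η l + δ l) atTop (nhds 0) := by
      have := (hηlim.const_mul ρ').add hδlim
      simpa using this
    have := hcoef.mul hw.norm
    simpa using this
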